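/- For any finite alphabet Σ and any frame n : Σ → ℕ defined on all of Σ, the set Π_n equals the convex hull of PBA_n, the set of pseudo-binary approximations for n. -/

import Mathlib

/-- `p` is a probability distribution on the finite alphabet `α`. -/
def IsProbDist {α : Type*} [Fintype α] (p : α → ℝ) : Prop :=
  (∀ σ, 0 ≤ p σ) ∧ ∑ σ, p σ = 1

/-- `x` is one of the two binary values `2 ^ (−n σ)`, `2 ^ (−(n σ − 1))` allowed at `σ`. -/
def BinaryVal {α : Type*} (n : α → ℕ) (σ : α) (x : ℝ) : Prop :=
  x = (2 : ℝ) ^ (-(n σ : ℤ)) ∨ x = (2 : ℝ) ^ (-((n σ : ℤ) - 1))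

/-- `Π_n`: probability distributions `p` on `α` with
`2 ^ (−n σ) ≤ p σ ≤ 2 ^ (−(n σ − 1))` for every `σ`. -/
def PiN {α : Type*} [Fintype α] (n : α → ℕ) : Set (α → ℝ) :=
  {p | IsProbDist p ∧
    ∀ σ, (2 : ℝ) ^ (-(n σ : ℤ)) ≤ p σ ∧ p σ ≤ (2 : ℝ) ^ (-((n σ : ℤ) - 1))}

/-- `PBA_n`: pseudo-binary approximations for the frame `n`, i.e. members of `Π_n` for which all
but at most one character takes a binary value. -/
def PBA {α : Type*} [Fintype α] (n : α → ℕ) : Set (α → ℝ) :=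
  {p | p ∈ PiN n ∧
    ∀ σ τ : α, ¬ BinaryVal n σ (p σ) → ¬ BinaryVal n τ (p τ) → σ = τ}

open Finset

section Aux

variable {α : Type*} [Fintype α]

lemma convex_PiN (n : α → ℕ) : Convex ℝ (PiN n) := by
  intro p hp q hq a b ha hb hab
  obtain ⟨⟨hp0, hps⟩, hpb⟩ := hp
  obtain ⟨⟨hq0, hqs⟩, hqb⟩ := hq
  refine ⟨⟨fun σ => ?_, ?_⟩, fun σ => ⟨?_, ?_⟩⟩
  · simp only [Pi.add_apply, Pi.smul_apply, smul_eq_mul]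
    exact add_nonneg (mul_nonneg ha (hp0 σ)) (mul_nonneg hb (hq0 σ))
  · simp only [Pi.add_apply, Pi.smul_apply, smul_eq_mul]
    rw [Finset.sum_add_distrib, ← Finset.mul_sum, ← Finset.mul_sum, hps, hqs]
    linarith
  · have h1 := mul_le_mul_of_nonneg_left (hpb σ).1 ha
    have h2 := mul_le_mul_of_nonneg_left (hqb σ).1 hb
    have h3 : a * (2:ℝ) ^ (-(n σ : ℤ)) + b * (2:ℝ) ^ (-(n σ : ℤ)) = (2:ℝ) ^ (-(n σ : ℤ)) := by
      rw [← add_mul, hab, one_mul]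
    simp only [Pi.add_apply, Pi.smul_apply, smul_eq_mul]
    linarith
  · have h1 := mul_le_mul_of_nonneg_left (hpb σ).2 ha
    have h2 := mul_le_mul_of_nonneg_left (hqb σ).2 hb
    have h3 : a * (2:ℝ) ^ (-((n σ : ℤ) - 1)) + b * (2:ℝ) ^ (-((n σ : ℤ) - 1))
        = (2:ℝ) ^ (-((n σ : ℤ) - 1)) := by
      rw [← add_mul, hab, one_mul]
    simp only [Pi.add_apply, Pi.smul_apply, smul_eq_mul]
    linarith

/-- Move mass `t` from `τ` to `σ`. -/
noncomputable def adj [DecidableEq α] (p : α → ℝ) (σ τ : α) (t : ℝ) : α → ℝ :=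
  fun x => p x + (if x = σ then t else 0) - (if x = τ then t else 0)

variable [DecidableEq α]

lemma adj_self {p : α → ℝ} {σ τ : α} (h : σ ≠ τ) (t : ℝ) : adj p σ τ t σ = p σ + t := by
  simp [adj, h]

lemma adj_other {p : α → ℝ} {σ τ : α} (h : σ ≠ τ) (t : ℝ) : adj p σ τ t τ = p τ - t := by
  simp [adj, h.symm]

lemma adj_ne {p : α → ℝ} {σ τ x : α} (hx : x ≠ σ) (hx' : x ≠ τ) (t : ℝ) :
    adj p σ τ t x = p x := by
  simp [adj, hx, hx']

lemma adj_sum (p : α → ℝ) {σ τ : α} (h : σ ≠ τ) (t : ℝ) :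
    ∑ x, adj p σ τ t x = ∑ x, p x := by
  simp only [adj]
  rw [Finset.sum_sub_distrib, Finset.sum_add_distrib]
  simp [Finset.sum_ite_eq']

open Classical in
/-- Free coordinates of `p` (not taking a binary value). -/
noncomputable def free (n : α → ℕ) (p : α → ℝ) : Finset α :=
  Finset.univ.filter (fun x => ¬ BinaryVal n x (p x))

lemma mem_free {n : α → ℕ} {p : α → ℝ} {x : α} :
    x ∈ free n p ↔ ¬ BinaryVal n x (p x) := by
  classical
  simp [free]

lemma strict_of_free {n : α → ℕ} {p : α → ℝ} (hp : p ∈ PiN n) {σ : α}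
    (h : ¬ BinaryVal n σ (p σ)) :
    (2 : ℝ) ^ (-(n σ : ℤ)) < p σ ∧ p σ < (2 : ℝ) ^ (-((n σ : ℤ) - 1)) := by
  have hb := hp.2 σ
  rw [BinaryVal] at h
  push_neg at h
  exact ⟨lt_of_le_of_ne hb.1 (Ne.symm h.1), lt_of_le_of_ne hb.2 h.2⟩

/-- Pushing mass from a free `τ` to a free `σ` by the maximal amount keeps us in `Π_n`
and makes one of `σ`, `τ` binary; all other coordinates are unchanged. -/
lemma adj_step {n : α → ℕ} {p : α → ℝ} (hp : p ∈ PiN n) {σ τ : α} (hστ : σ ≠ τ)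
    (hσ : ¬ BinaryVal n σ (p σ)) (hτ : ¬ BinaryVal n τ (p τ)) :
    adj p σ τ (min ((2 : ℝ) ^ (-((n σ : ℤ) - 1)) - p σ) (p τ - (2 : ℝ) ^ (-(n τ : ℤ)))) ∈ PiN n ∧
    0 < min ((2 : ℝ) ^ (-((n σ : ℤ) - 1)) - p σ) (p τ - (2 : ℝ) ^ (-(n τ : ℤ))) ∧
    (BinaryVal n σ (adj p σ τ (min ((2 : ℝ) ^ (-((n σ : ℤ) - 1)) - p σ)
        (p τ - (2 : ℝ) ^ (-(n τ : ℤ)))) σ) ∨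
     BinaryVal n τ (adj p σ τ (min ((2 : ℝ) ^ (-((n σ : ℤ) - 1)) - p σ)
        (p τ - (2 : ℝ) ^ (-(n τ : ℤ)))) τ)) := by
  set t := min ((2 : ℝ) ^ (-((n σ : ℤ) - 1)) - p σ) (p τ - (2 : ℝ) ^ (-(n τ : ℤ))) with ht
  have hsσ := strict_of_free hp hσ
  have hsτ := strict_of_free hp hτ
  have htpos : 0 < t := lt_min (by linarith [hsσ.2]) (by linarith [hsτ.1])
  have ht1 : t ≤ (2 : ℝ) ^ (-((n σ : ℤ) - 1)) - p σ := min_le_left _ _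
  have ht2 : t ≤ p τ - (2 : ℝ) ^ (-(n τ : ℤ)) := min_le_right _ _
  have hbnd : ∀ x, (2 : ℝ) ^ (-(n x : ℤ)) ≤ adj p σ τ t x ∧
      adj p σ τ t x ≤ (2 : ℝ) ^ (-((n x : ℤ) - 1)) := by
    intro x
    by_cases hxσ : x = σ
    · subst hxσ
      rw [adj_self hστ]
      exact ⟨by linarith [(hp.2 x).1], by linarith⟩
    · by_cases hxτ : x = τ
      · subst hxτ
        rw [adj_other hστ]
        exact ⟨by linarith, by linarith [(hp.2 x).2]⟩
      · rw [adj_ne hxσ hxτ]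
        exact hp.2 x
  refine ⟨⟨⟨fun x => le_trans (by positivity) (hbnd x).1, ?_⟩, hbnd⟩, htpos, ?_⟩
  · rw [adj_sum p hστ]
    exact hp.1.2
  · rcases min_cases ((2 : ℝ) ^ (-((n σ : ℤ) - 1)) - p σ) (p τ - (2 : ℝ) ^ (-(n τ : ℤ)))
      with ⟨he, _⟩ | ⟨he, _⟩
    · left
      rw [adj_self hστ, ht, he]
      right; ring
    · right
      rw [adj_other hστ, ht, he]
      left; ring

lemma free_adj_lt {n : α → ℕ} {p : α → ℝ} (hp : p ∈ PiN n) {σ τ : α} (hστ : σ ≠ τ)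
    (hσ : ¬ BinaryVal n σ (p σ)) (hτ : ¬ BinaryVal n τ (p τ)) {t : ℝ}
    (hw : BinaryVal n σ (adj p σ τ t σ) ∨ BinaryVal n τ (adj p σ τ t τ)) :
    (free n (adj p σ τ t)).card < (free n p).card := by
  have hsub : free n (adj p σ τ t) ⊆ free n p := by
    intro x hx
    rw [mem_free] at hx ⊢
    by_cases hxσ : x = σ
    · subst hxσ; exact hσ
    · by_cases hxτ : x = τ
      · subst hxτ; exact hτ
      · rw [adj_ne hxσ hxτ] at hx; exact hx
  have hss : free n (adj p σ τ t) ⊂ free n p := by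
    rcases hw with hw | hw
    · exact (Finset.ssubset_iff_of_subset hsub).mpr
        ⟨σ, mem_free.mpr hσ, fun h => (mem_free.mp h) hw⟩
    · exact (Finset.ssubset_iff_of_subset hsub).mpr
        ⟨τ, mem_free.mpr hτ, fun h => (mem_free.mp h) hw⟩
  exact Finset.card_lt_card hss

lemma mem_hull_aux (n : α → ℕ) :
    ∀ k (p : α → ℝ), p ∈ PiN n → (free n p).card ≤ k → p ∈ convexHull ℝ (PBA n) := by
  intro k
  induction k with
  | zero =>
    intro p hp hc
    refine subset_convexHull ℝ (PBA n) ⟨hp, fun σ τ hσ hτ => ?_⟩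
    have := Finset.card_eq_zero.mp (Nat.le_zero.mp hc)
    exact absurd (mem_free.mpr hσ) (by simp [this])
  | succ k ih =>
    intro p hp hc
    by_cases h1 : (free n p).card ≤ 1
    · refine subset_convexHull ℝ (PBA n) ⟨hp, fun σ τ hσ hτ => ?_⟩
      exact Finset.card_le_one.mp h1 σ (mem_free.mpr hσ) τ (mem_free.mpr hτ)
    · push_neg at h1
      obtain ⟨σ, hσm, τ, hτm, hστ⟩ := Finset.one_lt_card.mp h1
      have hσ := mem_free.mp hσm
      have hτ := mem_free.mp hτm
      obtain ⟨hq, ht1pos, hqw⟩ := adj_step hp hστ hσ hτ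
      obtain ⟨hr, ht2pos, hrw⟩ := adj_step hp hστ.symm hτ hσ
      set t1 := min ((2 : ℝ) ^ (-((n σ : ℤ) - 1)) - p σ) (p τ - (2 : ℝ) ^ (-(n τ : ℤ))) with ht1
      set t2 := min ((2 : ℝ) ^ (-((n τ : ℤ) - 1)) - p τ) (p σ - (2 : ℝ) ^ (-(n σ : ℤ))) with ht2
      have hqcard : (free n (adj p σ τ t1)).card ≤ k := by
        have := free_adj_lt hp hστ hσ hτ hqw
        omega
      have hrcard : (free n (adj p τ σ t2)).card ≤ k := by
        have := free_adj_lt hp hστ.symm hτ hσ hrw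
        omega
      have hqh := ih (adj p σ τ t1) hq hqcard
      have hrh := ih (adj p τ σ t2) hr hrcard
      have hts : 0 < t1 + t2 := by linarith
      have hcomb : (t2 / (t1 + t2)) • adj p σ τ t1 + (t1 / (t1 + t2)) • adj p τ σ t2 = p := by
        funext x
        simp only [Pi.add_apply, Pi.smul_apply, smul_eq_mul]
        by_cases hxσ : x = σ
        · subst hxσ
          rw [adj_self hστ, adj_other hστ.symm]
          field_simp
          ring
        · by_cases hxτ : x = τ
          · subst hxτ
            rw [adj_other hστ, adj_self hστ.symm]
            field_simp
            ring
          · rw [adj_ne hxσ hxτ, adj_ne hxτ hxσ]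
            field_simp
            ring
      have := (convex_convexHull ℝ (PBA n)) hqh hrh (a := t2 / (t1 + t2))
        (b := t1 / (t1 + t2)) (by positivity) (by positivity)
        (by rw [← add_div, add_comm]; exact div_self (ne_of_gt hts))
      rwa [hcomb] at this

end Aux

/-- **Claim.** For any finite alphabet and any frame `n` defined on all of it (with positive
values), `Π_n` is the convex hull of `PBA_n`. -/
theorem PiN_eq_convexHull_PBA {α : Type*} [Fintype α] (n : α → ℕ)
    (hn : ∀ σ, 1 ≤ n σ) :
    PiN n = convexHull ℝ (PBA n) := by
  classical
  apply le_antisymm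
  · intro p hp
    exact mem_hull_aux n (free n p).card p hp le_rfl
  · rw [← (convex_PiN n).convexHull_eq]
    exact convexHull_mono (fun p hp => hp.1)
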